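/- Let G be a finite simple graph on n vertices that is strongly regular with parameters (n, d, λ, μ) with μ ≥ 1. Then for every vertex v, the depth-2 IGEL encoding of v is the multiset consisting of the pair (0, d) with multiplicity 1, the pair (1, d) with multiplicity d, and the pair (2, d) with multiplicity n − d − 1. In particular, the depth-2 IGEL encoding of a vertex of such a graph depends only on n and d, and not on λ or μ. -/

import Mathlib

open Classical in
/-- The closed `k`-ball `B_k(v) = {u | dist_G(u, v) ≤ k}` (as a finset of vertices that
are reachable from `v` within distance `k`). -/
noncomputable def kball {V : Type*} [Fintype V] (G : SimpleGraph V) (v : V) (k : ℕ) :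
    Finset V :=
  Finset.univ.filter fun u => G.Reachable u v ∧ G.dist u v ≤ k

open Classical in
/-- `d_S(u|v)`: the degree of `u` in the subgraph of `G` induced on `B_k(v)`. -/
noncomputable def dSub {V : Type*} [Fintype V] (G : SimpleGraph V) (v : V) (k : ℕ)
    (u : V) : ℕ :=
  ((kball G v k).filter fun w => G.Adj u w).card

/-- The depth-`k` IGEL encoding of `v`: the multiset of pairs
`(dist_G(u, v), d_S(u|v))` over all `u ∈ B_k(v)`. -/
noncomputable def igel {V : Type*} [Fintype V] (G : SimpleGraph V) (k : ℕ) (v : V) :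
    Multiset (ℕ × ℕ) :=
  (kball G v k).val.map fun u => (G.dist u v, dSub G v k u)

/-- In a strongly regular graph on `n` vertices with parameters
`(n, d, l, m)`, `m ≥ 1`, the depth-2 IGEL encoding of every vertex `v` is the multiset
consisting of `(0, d)` once, `(1, d)` with multiplicity `d`, and `(2, d)` with
multiplicity `n - d - 1`; in particular it depends only on `n` and `d`, and not on
`l` or `m`. -/
lemma my_disjUnion_val {α : Type*} (s t : Finset α) (h : Disjoint s t) :
    (s.disjUnion t h).val = s.val + t.val := rfl

theorem srg_igel_two {V : Type*} [Fintype V] {G : SimpleGraph V} [DecidableRel G.Adj]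
    {n d l m : ℕ} (h : G.IsSRGWith n d l m) (hm : 1 ≤ m) (v : V) :
    igel G 2 v = Multiset.replicate 1 (0, d) + Multiset.replicate d (1, d) +
      Multiset.replicate (n - d - 1) (2, d) := by
  classical
  have hdist2 : ∀ u : V, u ≠ v → ¬ G.Adj u v → G.Reachable u v ∧ G.dist u v = 2 := by
    intro u hne hadj
    have hcard : Fintype.card (G.commonNeighbors u v) = m := h.of_not_adj hne hadj
    have hpos : 0 < Fintype.card (G.commonNeighbors u v) := by omega
    obtain ⟨⟨w, hw⟩⟩ := Fintype.card_pos_iff.mp hpos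
    rw [SimpleGraph.mem_commonNeighbors] at hw
    have hr : G.Reachable u v := ⟨hw.1.toWalk.append hw.2.symm.toWalk⟩
    have hle : G.dist u v ≤ 2 := by
      simpa using SimpleGraph.dist_le (hw.1.toWalk.append hw.2.symm.toWalk)
    have h0 : G.dist u v ≠ 0 := by
      rw [SimpleGraph.dist_ne_zero_iff_ne_and_reachable]
      exact ⟨hne, hr⟩
    have h1 : G.dist u v ≠ 1 := fun h1 => hadj (SimpleGraph.dist_eq_one_iff_adj.mp h1)
    exact ⟨hr, by omega⟩
  have hball : kball G v 2 = Finset.univ := by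
    ext u
    simp only [kball, Finset.mem_filter, Finset.mem_univ, true_and, iff_true]
    by_cases hu : u = v
    · subst hu
      exact ⟨SimpleGraph.Reachable.refl u, by simp [SimpleGraph.dist_self]⟩
    by_cases ha : G.Adj u v
    · refine ⟨ha.reachable, ?_⟩
      rw [SimpleGraph.dist_eq_one_iff_adj.mpr ha]
      omega
    · obtain ⟨hr, hd⟩ := hdist2 u hu ha
      exact ⟨hr, by omega⟩
  have hdsub : ∀ u, dSub G v 2 u = d := by
    intro u
    unfold dSub
    rw [hball]
    have heq : ((Finset.univ : Finset V).filter fun w => G.Adj u w).card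
        = G.degree u := by
      rw [← SimpleGraph.card_neighborFinset_eq_degree]
      congr 1
      ext w
      simp
    rw [Finset.filter_congr_decidable, heq]
    exact h.regular u
  have hvn : v ∉ G.neighborFinset v := by simp
  set N := G.neighborFinset v with hN
  set R := Finset.univ \ insert v N with hR
  have hd1 : Disjoint ({v} : Finset V) N := by simp [hvn]
  have hd2 : Disjoint (({v} : Finset V).disjUnion N hd1) R := by
    rw [Finset.disjoint_left]
    intro u hu hu'
    simp only [Finset.disjUnion_eq_union, Finset.mem_union, Finset.mem_singleton] at hu
    rw [hR, Finset.mem_sdiff, Finset.mem_insert] at hu'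
    tauto
  have huniv : (Finset.univ : Finset V) = (({v} : Finset V).disjUnion N hd1).disjUnion R hd2 := by
    ext u
    simp only [Finset.disjUnion_eq_union, Finset.mem_union, Finset.mem_singleton,
      Finset.mem_univ, true_iff, hR, Finset.mem_sdiff, Finset.mem_insert]
    by_cases h1 : u = v
    · tauto
    by_cases h2 : u ∈ N
    · tauto
    · right; exact ⟨trivial, by tauto⟩
  have hcardR : R.card = n - d - 1 := by
    have hsub : insert v N ⊆ Finset.univ := Finset.subset_univ _
    rw [hR, Finset.card_sdiff_of_subset hsub, Finset.card_insert_of_notMem hvn,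
      Finset.card_univ, h.card]
    have : N.card = d := h.regular v
    omega
  unfold igel
  rw [hball, huniv, my_disjUnion_val, my_disjUnion_val, Multiset.map_add,
    Multiset.map_add]
  congr 1
  · congr 1
    · have hv0 : (G.dist v v, dSub G v 2 v) = (0, d) := by
        simp [hdsub]
      simp [hv0, hdsub]
    · rw [Multiset.map_congr rfl (fun u hu => ?_), Multiset.map_const',
        show N.val.card = d from h.regular v]
      have hadj : G.Adj u v := by
        have hm' : u ∈ N := hu
        rw [hN, SimpleGraph.mem_neighborFinset] at hm'
        exact hm'.symm
      show (G.dist u v, dSub G v 2 u) = (1, d)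
      rw [hdsub, SimpleGraph.dist_eq_one_iff_adj.mpr hadj]
  · rw [Multiset.map_congr rfl (fun u hu => ?_), Multiset.map_const', show Multiset.card R.val = n - d - 1 from hcardR]
    have hu' : u ∈ R := hu
    rw [hR, Finset.mem_sdiff, Finset.mem_insert] at hu'
    push_neg at hu'
    obtain ⟨-, hne, hnm⟩ := hu'
    have hnadj : ¬ G.Adj u v := by
      rw [hN, SimpleGraph.mem_neighborFinset] at hnm
      exact fun hc => hnm hc.symm
    obtain ⟨-, hd2'⟩ := hdist2 u hne hnadj
    show (G.dist u v, dSub G v 2 u) = (2, d)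
    rw [hdsub, hd2']
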